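/- Let θ > 0 and let (M_k)_{k≥2} be a sequence of independent random variables on a probability space with P(M_k = j) = ((k-1)/(θ+k-1)) · (θ/(θ+k-1))^j for all j ∈ ℕ₀. Then S(n)/log n → θ almost surely as n → ∞, where S(n) = ∑_{k=2}^{n} M_k. -/

import Mathlib

set_option maxHeartbeats 1000000
set_option linter.unusedSectionVars false

open MeasureTheory ProbabilityTheory Filter Finset
open scoped ENNReal NNReal




section Aux

variable {Ω : Type*} [MeasurableSpace Ω] {μ : Measure Ω} [IsProbabilityMeasure μ]

lemma geom_integral_comp (X : Ω → ℕ) (hX : Measurable X) (ρ : ℕ → ℝ) (hρ : ∀ j, 0 ≤ ρ j)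
    (hlaw : ∀ j, μ {ω | X ω = j} = ENNReal.ofReal (ρ j))
    (f : ℕ → ℝ) (hf : ∀ j, 0 ≤ f j) {A : ℝ} (hsum : HasSum (fun j => f j * ρ j) A) :
    Integrable (fun ω => f (X ω)) μ ∧ ∫ ω, f (X ω) ∂μ = A := by
  have hmeasf : Measurable fun ω => f (X ω) := measurable_from_nat.comp hX
  have hlint : ∫⁻ ω, ENNReal.ofReal (f (X ω)) ∂μ = ENNReal.ofReal A := by
    rw [← lintegral_map (measurable_from_nat (f := fun j => ENNReal.ofReal (f j))) hX,
      lintegral_countable']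
    have : ∀ j : ℕ, (μ.map X) {j} = ENNReal.ofReal (ρ j) := by
      intro j
      rw [Measure.map_apply hX (measurableSet_singleton j)]
      exact hlaw j
    simp_rw [this]
    rw [← HasSum.tsum_eq hsum, ENNReal.ofReal_tsum_of_nonneg
      (fun j => mul_nonneg (hf j) (hρ j)) hsum.summable]
    congr 1 with j
    rw [ENNReal.ofReal_mul (hf j)]
  have hae : 0 ≤ᵐ[μ] fun ω => f (X ω) := Filter.Eventually.of_forall fun ω => hf _
  have hint : Integrable (fun ω => f (X ω)) μ := by
    refine ⟨hmeasf.aestronglyMeasurable, ?_⟩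
    rw [hasFiniteIntegral_iff_ofReal hae, hlint]
    exact ENNReal.ofReal_lt_top
  refine ⟨hint, ?_⟩
  rw [integral_eq_lintegral_of_nonneg_ae hae hmeasf.aestronglyMeasurable, hlint,
    ENNReal.toReal_ofReal]
  exact hasSum_le (fun j => mul_nonneg (hf j) (hρ j)) hasSum_zero hsum

lemma geom_stats (X : Ω → ℕ) (hX : Measurable X) {q : ℝ} (hq0 : 0 < q) (hq1 : q < 1)
    (hlaw : ∀ j, μ {ω | X ω = j} = ENNReal.ofReal ((1 - q) * q ^ j)) :
    MemLp (fun ω => (X ω : ℝ)) 2 μ ∧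
    ∫ ω, (X ω : ℝ) ∂μ = q / (1 - q) ∧
    variance (fun ω => (X ω : ℝ)) μ ≤ q / (1 - q) + 2 * (q / (1 - q)) ^ 2 := by
  have hp : 0 < 1 - q := by linarith
  have hρ : ∀ j : ℕ, 0 ≤ (1 - q) * q ^ j := fun j => mul_nonneg hp.le (pow_nonneg hq0.le j)
  have hqn : ‖q‖ < 1 := by rwa [Real.norm_eq_abs, abs_of_pos hq0]
  -- first moment
  have hsum1 : HasSum (fun j : ℕ => (j : ℝ) * ((1 - q) * q ^ j)) (q / (1 - q)) := by
    have := (hasSum_coe_mul_geometric_of_norm_lt_one (𝕜 := ℝ) hqn).mul_left (1 - q)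
    have heq : (fun j : ℕ => (1 - q) * ((j : ℝ) * q ^ j))
        = fun j : ℕ => (j : ℝ) * ((1 - q) * q ^ j) := by funext j; ring
    rw [heq] at this
    convert this using 1
    · rfl
    field_simp
  obtain ⟨hint1, hE1⟩ := geom_integral_comp X hX _ hρ hlaw (fun j => (j : ℝ))
    (fun j => Nat.cast_nonneg j) hsum1
  -- second moment
  have hsumC : HasSum (fun j : ℕ => ((j.choose 2 : ℝ)) * q ^ j) (q ^ 2 / (1 - q) ^ 3) := by
    have h2 := (hasSum_choose_mul_geometric_of_norm_lt_one (𝕜 := ℝ) 2 hqn).mul_left (q ^ 2)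
    have hv : q ^ 2 * (1 / (1 - q) ^ (2 + 1)) = q ^ 2 / (1 - q) ^ 3 := by ring
    rw [hv] at h2
    have heq : (fun n : ℕ => q ^ 2 * (((n + 2).choose 2 : ℝ) * q ^ n))
        = fun n : ℕ => (((n + 2).choose 2 : ℝ)) * q ^ (n + 2) := by funext n; ring
    rw [heq] at h2
    have := (hasSum_nat_add_iff (f := fun j : ℕ => ((j.choose 2 : ℝ)) * q ^ j) 2).mp h2
    simpa [Finset.sum_range_succ] using this
  have hsum2 : HasSum (fun j : ℕ => ((j : ℝ) ^ 2) * ((1 - q) * q ^ j))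
      (q / (1 - q) + 2 * q ^ 2 / (1 - q) ^ 2) := by
    have hs := ((hasSum_coe_mul_geometric_of_norm_lt_one (𝕜 := ℝ) hqn).add
      (hsumC.mul_left 2)).mul_left (1 - q)
    have heq : (fun j : ℕ => (1 - q) * ((j : ℝ) * q ^ j + 2 * ((j.choose 2 : ℝ) * q ^ j)))
        = fun j : ℕ => ((j : ℝ) ^ 2) * ((1 - q) * q ^ j) := by
      funext j
      have hc : (j.choose 2 : ℝ) = j * (j - 1) / 2 := Nat.cast_choose_two ℝ j
      rw [hc]
      ring
    rw [heq] at hs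
    convert hs using 1
    · rfl
    field_simp
  obtain ⟨hint2, hE2⟩ := geom_integral_comp X hX _ hρ hlaw (fun j => (j : ℝ) ^ 2)
    (fun j => sq_nonneg _) hsum2
  have hXr : Measurable fun ω => (X ω : ℝ) := measurable_from_nat.comp hX
  have hmem : MemLp (fun ω => (X ω : ℝ)) 2 μ := by
    rw [memLp_two_iff_integrable_sq hXr.aestronglyMeasurable]
    exact hint2
  refine ⟨hmem, hE1, ?_⟩
  rw [variance_eq_sub hmem]
  have : μ[(fun ω => (X ω : ℝ)) ^ 2] = q / (1 - q) + 2 * q ^ 2 / (1 - q) ^ 2 := by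
    rw [← hE2]; rfl
  rw [this, hE1]
  have : 2 * q ^ 2 / (1 - q) ^ 2 = 2 * (q / (1 - q)) ^ 2 := by
    field_simp
  rw [this]
  nlinarith [sq_nonneg (q / (1 - q))]

end Aux



lemma harmonic_sum_eq (n : ℕ) :
    ∑ k ∈ Finset.Icc 2 n, (1 : ℝ) / ((k : ℝ) - 1) = (harmonic (n - 1) : ℝ) := by
  rw [harmonic_eq_sum_Icc]
  push_cast
  rw [eq_comm]
  refine Finset.sum_nbij' (fun i => i + 1) (fun k => k - 1) ?_ ?_ ?_ ?_ ?_
  · intro i hi; simp only [Finset.mem_Icc] at *; omega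
  · intro k hk; simp only [Finset.mem_Icc] at *; omega
  · intro i hi; simp only [Finset.mem_Icc] at *; omega
  · intro k hk; simp only [Finset.mem_Icc] at *; omega
  · intro i hi
    simp only [Finset.mem_Icc] at hi
    push_cast
    rw [one_div]
    congr 1
    ring

lemma harmonic_log_lb {n : ℕ} (hn : 1 ≤ n) : Real.log n ≤ (harmonic (n - 1) : ℝ) := by
  have h := log_add_one_le_harmonic (n - 1)
  have hcast : n - 1 + 1 = n := by omega
  rwa [hcast] at h

lemma harmonic_log_ub {n : ℕ} (hn : 2 ≤ n) : (harmonic (n - 1) : ℝ) ≤ 1 + Real.log n := by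
  refine (harmonic_le_one_add_log (n - 1)).trans ?_
  have h1 : (0 : ℝ) < ((n - 1 : ℕ) : ℝ) := by
    have : 1 ≤ n - 1 := by omega
    exact_mod_cast Nat.lt_of_lt_of_le Nat.zero_lt_one this
  have h2 : ((n - 1 : ℕ) : ℝ) ≤ (n : ℝ) := by exact_mod_cast Nat.sub_le n 1
  linarith [Real.log_le_log h1 h2]

lemma deterministic_slln (θ : ℝ) (hθ : 0 < θ) (T : ℕ → ℝ) (hT0 : ∀ n, 0 ≤ T n)
    (hmono : Monotone T)
    (hH : ∀ j : ℕ, ∀ᶠ m : ℕ in atTop,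
      |T (2 ^ (m ^ 2)) - θ * (harmonic (2 ^ (m ^ 2) - 1) : ℝ)|
        < (1 / ((j : ℝ) + 1)) * Real.log ((2 ^ (m ^ 2) : ℕ) : ℝ)) :
    Filter.Tendsto (fun n : ℕ => T n / Real.log n) atTop (nhds θ) := by
  set L := Real.log 2 with hLdef
  have hL0 : 0 < L := Real.log_pos one_lt_two
  have hL1 : L ≤ 1 := by
    have := Real.log_le_sub_one_of_pos (show (0:ℝ) < 2 by norm_num)
    linarith
  set N : ℕ → ℕ := fun m => 2 ^ (m ^ 2) with hNdef
  have hlogN : ∀ m : ℕ, Real.log ((N m : ℕ) : ℝ) = (m : ℝ) ^ 2 * L := by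
    intro m
    have : ((N m : ℕ) : ℝ) = (2 : ℝ) ^ (m ^ 2) := by simp [hNdef]
    rw [this, Real.log_pow]
    push_cast
    ring
  have hN2 : ∀ m : ℕ, 1 ≤ m → 2 ≤ N m := by
    intro m hm
    have : 2 ^ 1 ≤ 2 ^ (m ^ 2) := Nat.pow_le_pow_right (by norm_num) (by nlinarith)
    simpa [hNdef] using this
  rw [Metric.tendsto_atTop]
  intro δ hδ
  obtain ⟨j, hj⟩ := exists_nat_one_div_lt (show (0:ℝ) < min δ θ from lt_min hδ hθ)
  set ε := 1 / ((j : ℝ) + 1) with hεdef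
  have hε0 : 0 < ε := by positivity
  have hεδ : ε < δ := lt_of_lt_of_le hj (min_le_left _ _)
  have hεθ : ε < θ := lt_of_lt_of_le hj (min_le_right _ _)
  -- ratio limits
  have hr1 : Filter.Tendsto (fun m : ℕ => 1 + 1 / (m : ℝ)) atTop (nhds 1) := by
    simpa using (tendsto_const_nhds (x := (1:ℝ))).add tendsto_one_div_atTop_nhds_zero_nat
  have hrr : Filter.Tendsto (fun m : ℕ => ((m : ℝ) + 1) ^ 2 / (m : ℝ) ^ 2) atTop (nhds 1) := by
    have h2 : Filter.Tendsto (fun m : ℕ => (1 + 1 / (m : ℝ)) ^ 2) atTop (nhds 1) := by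
      simpa using hr1.pow 2
    refine h2.congr' ?_
    filter_upwards [eventually_ge_atTop 1] with m hm
    have hm0 : (m : ℝ) ≠ 0 := by positivity
    field_simp
  have hinv2 : Filter.Tendsto (fun m : ℕ => 1 / ((m : ℝ) ^ 2)) atTop (nhds 0) := by
    have := (tendsto_one_div_atTop_nhds_zero_nat (𝕜 := ℝ)).mul tendsto_one_div_atTop_nhds_zero_nat
    simpa [div_mul_div_comm, ← pow_two] using this
  have hu : Filter.Tendsto
      (fun m : ℕ => ((θ + ε) * ((m : ℝ) + 1) ^ 2 * L + θ) / ((m : ℝ) ^ 2 * L))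
      atTop (nhds (θ + ε)) := by
    have h := (hrr.const_mul (θ + ε)).add (hinv2.const_mul (θ / L))
    have h' : Filter.Tendsto
        (fun m : ℕ => (θ + ε) * (((m : ℝ) + 1) ^ 2 / (m : ℝ) ^ 2) + (θ / L) * (1 / (m : ℝ) ^ 2))
        atTop (nhds (θ + ε)) := by simpa using h
    refine h'.congr' ?_
    filter_upwards [eventually_ge_atTop 1] with m hm
    have hm0 : (m : ℝ) ≠ 0 := by positivity
    field_simp
  have hl : Filter.Tendsto
      (fun m : ℕ => (θ - ε) * (m : ℝ) ^ 2 * L / (((m : ℝ) + 1) ^ 2 * L))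
      atTop (nhds (θ - ε)) := by
    have h := (hrr.inv₀ one_ne_zero).const_mul (θ - ε)
    have h' : Filter.Tendsto
        (fun m : ℕ => (θ - ε) * (((m : ℝ) + 1) ^ 2 / (m : ℝ) ^ 2)⁻¹)
        atTop (nhds (θ - ε)) := by simpa using h
    refine h'.congr' ?_
    filter_upwards [eventually_ge_atTop 1] with m hm
    have hm0 : (m : ℝ) ≠ 0 := by positivity
    have hm1 : ((m : ℝ) + 1) ≠ 0 := by positivity
    field_simp
  have hub := hu.eventually_lt_const (show θ + ε < θ + δ by linarith)
  have hlb := hl.eventually_const_lt (show θ - δ < θ - ε by linarith)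
  obtain ⟨m₁, hm₁⟩ := eventually_atTop.mp (((hH j).and hub).and hlb)
  set m₂ := max m₁ 1 with hm₂def
  refine ⟨N m₂, fun n hn => ?_⟩
  set m := Nat.sqrt (Nat.log 2 n) with hmdef
  have hmm : m₂ ≤ m := by
    have h1 : Nat.log 2 (N m₂) ≤ Nat.log 2 n := Nat.log_mono_right hn
    have h2 : Nat.log 2 (N m₂) = m₂ ^ 2 := Nat.log_pow one_lt_two _
    have h3 := Nat.sqrt_le_sqrt h1
    rwa [h2, Nat.sqrt_eq'] at h3
  have h1m : 1 ≤ m := le_trans (le_max_right _ _) hmm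
  have hmP : m₁ ≤ m := le_trans (le_max_left _ _) hmm
  obtain ⟨⟨hPm, hUm⟩, hLm⟩ := hm₁ m hmP
  obtain ⟨⟨hPm1, _⟩, _⟩ := hm₁ (m + 1) (le_trans hmP (Nat.le_succ m))
  have h2n : 2 ≤ n := le_trans (hN2 m₂ (le_max_right _ _)) hn
  have hNm_le_n : N m ≤ n := by
    calc N m = 2 ^ (m ^ 2) := rfl
    _ ≤ 2 ^ (Nat.log 2 n) := Nat.pow_le_pow_right (by norm_num) (Nat.sqrt_le' _)
    _ ≤ n := Nat.pow_log_le_self 2 (by omega)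
  have hn_lt : n ≤ N (m + 1) := by
    have hstep : n < 2 ^ (Nat.log 2 n + 1) := Nat.lt_pow_succ_log_self one_lt_two n
    have hsq : Nat.log 2 n < (m + 1) ^ 2 := by
      simpa [Nat.succ_eq_add_one, hmdef] using Nat.lt_succ_sqrt' (Nat.log 2 n)
    have hle : Nat.log 2 n + 1 ≤ (m + 1) ^ 2 := hsq
    exact le_of_lt (lt_of_lt_of_le hstep (Nat.pow_le_pow_right (by norm_num) hle))
  -- log bounds
  have hNm2 : 2 ≤ N m := hN2 m h1m
  have hNm12 : 2 ≤ N (m + 1) := hN2 (m + 1) (by omega)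
  have hlogn_lb : (m : ℝ) ^ 2 * L ≤ Real.log n := by
    rw [← hlogN m]
    exact Real.log_le_log (by exact_mod_cast Nat.lt_of_lt_of_le Nat.zero_lt_one (by omega))
      (by exact_mod_cast hNm_le_n)
  have hlogn_ub : Real.log n ≤ ((m : ℝ) + 1) ^ 2 * L := by
    have := Real.log_le_log (show (0:ℝ) < n by exact_mod_cast (by omega : 0 < n))
      (show (n:ℝ) ≤ ((N (m+1) : ℕ) : ℝ) by exact_mod_cast hn_lt)
    rw [hlogN (m + 1)] at this
    push_cast at this
    linarith
  have hm2L_pos : 0 < (m : ℝ) ^ 2 * L := by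
    have : (1:ℝ) ≤ (m:ℝ) := by exact_mod_cast h1m
    nlinarith
  have hlogn_pos : 0 < Real.log n := lt_of_lt_of_le hm2L_pos hlogn_lb
  -- harmonic bounds
  have hhub : (harmonic (N (m + 1) - 1) : ℝ) ≤ 1 + Real.log ((N (m+1) : ℕ) : ℝ) :=
    harmonic_log_ub hNm12
  have hhlb : Real.log ((N m : ℕ) : ℝ) ≤ (harmonic (N m - 1) : ℝ) :=
    harmonic_log_lb (by omega)
  rw [abs_sub_lt_iff] at hPm hPm1
  rw [hlogN m] at hPm hhlb
  rw [hlogN (m + 1)] at hPm1 hhub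
  push_cast at hPm1 hhub
  -- upper bound on T n
  have hTn_ub : T n ≤ (θ + ε) * ((m : ℝ) + 1) ^ 2 * L + θ := by
    have h1 : T n ≤ T (N (m + 1)) := hmono hn_lt
    have h2 : θ * (harmonic (N (m + 1) - 1) : ℝ) ≤ θ * (1 + ((m:ℝ)+1) ^ 2 * L) :=
      mul_le_mul_of_nonneg_left hhub hθ.le
    nlinarith [hPm1.1]
  have hTn_lb : (θ - ε) * (m : ℝ) ^ 2 * L ≤ T n := by
    have h1 : T (N m) ≤ T n := hmono hNm_le_n
    have h2 : θ * ((m:ℝ) ^ 2 * L) ≤ θ * (harmonic (N m - 1) : ℝ) :=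
      mul_le_mul_of_nonneg_left hhlb hθ.le
    nlinarith [hPm.2]
  -- conclude
  have hup : T n / Real.log n ≤ ((θ + ε) * ((m : ℝ) + 1) ^ 2 * L + θ) / ((m : ℝ) ^ 2 * L) := by
    apply div_le_div₀ (by positivity) hTn_ub hm2L_pos hlogn_lb
  have hdown : (θ - ε) * (m : ℝ) ^ 2 * L / (((m : ℝ) + 1) ^ 2 * L) ≤ T n / Real.log n := by
    apply div_le_div₀ (hT0 n) hTn_lb hlogn_pos hlogn_ub
  rw [Real.dist_eq, abs_sub_lt_iff]
  constructor <;> linarith [lt_of_le_of_lt hup hUm, lt_of_lt_of_le hLm hdown]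


/-- Watterson's strong law of large numbers: if `(M_k)_{k≥2}` are independent geometric
random variables with success parameters `(k-1)/(θ+k-1)` and `S(n) = ∑_{k=2}^n M_k`, then
`S(n)/log n → θ` almost surely. -/
theorem segregatingSites_slln {Ω : Type*} [MeasurableSpace Ω]
    (μ : Measure Ω) [IsProbabilityMeasure μ]
    (θ : ℝ) (hθ : 0 < θ)
    (M : ℕ → Ω → ℕ) (hmeas : ∀ k, Measurable (M k))
    (hindep : iIndepFun
      (fun k : {k : ℕ // 2 ≤ k} => M k.val) μ)
    (hlaw : ∀ k, 2 ≤ k → ∀ j : ℕ, μ {ω | M k ω = j} =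
      ENNReal.ofReal (((k : ℝ) - 1) / (θ + k - 1) * (θ / (θ + k - 1)) ^ j)) :
    ∀ᵐ ω ∂μ,
      Tendsto (fun n : ℕ => (∑ k ∈ Finset.Icc 2 n, (M k ω : ℝ)) / Real.log n)
        atTop (nhds θ) := by
  classical
  set X : ℕ → Ω → ℝ := fun k ω => (M k ω : ℝ) with hXdef
  -- per-k statistics
  have hstats : ∀ k, 2 ≤ k → MemLp (X k) 2 μ ∧ (∫ ω, X k ω ∂μ) = θ * (1 / ((k : ℝ) - 1)) ∧
      variance (X k) μ ≤ (θ + 2 * θ ^ 2) * (1 / ((k : ℝ) - 1)) := by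
    intro k hk
    have hk1 : (1 : ℝ) ≤ (k : ℝ) - 1 := by
      have : (2 : ℝ) ≤ (k : ℝ) := by exact_mod_cast hk
      linarith
    have hc0 : (0 : ℝ) < (k : ℝ) - 1 := by linarith
    have ha : (0 : ℝ) < θ + (k : ℝ) - 1 := by linarith
    set q := θ / (θ + (k : ℝ) - 1) with hqdef
    have hq0 : 0 < q := div_pos hθ ha
    have hq1 : q < 1 := by
      rw [hqdef, div_lt_one ha]; linarith
    have h1q : 1 - q = ((k : ℝ) - 1) / (θ + (k : ℝ) - 1) := by
      rw [hqdef]; field_simp; ring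
    have hlaw' : ∀ j, μ {ω | M k ω = j} = ENNReal.ofReal ((1 - q) * q ^ j) := by
      intro j
      rw [hlaw k hk j, h1q, hqdef]
    obtain ⟨h2, hE, hV⟩ := geom_stats (M k) (hmeas k) hq0 hq1 hlaw'
    have hm : q / (1 - q) = θ / ((k : ℝ) - 1) := by
      rw [h1q, hqdef, div_div_div_eq]
      rw [div_eq_div_iff (by positivity) hc0.ne']
      ring
    refine ⟨h2, ?_, ?_⟩
    · rw [hE, hm, mul_one_div]
    · refine hV.trans ?_
      rw [hm, div_pow]
      have key : θ ^ 2 / ((k : ℝ) - 1) ^ 2 ≤ θ ^ 2 / ((k : ℝ) - 1) := by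
        apply div_le_div_of_nonneg_left (by positivity) hc0 (by nlinarith)
      have expand : (θ + 2 * θ ^ 2) * (1 / ((k : ℝ) - 1))
          = θ / ((k : ℝ) - 1) + 2 * (θ ^ 2 / ((k : ℝ) - 1)) := by ring
      rw [expand]
      linarith
  -- partial sums
  set S : ℕ → Ω → ℝ := fun n => ∑ k ∈ Finset.Icc 2 n, X k with hSdef
  have hSapp : ∀ n ω, S n ω = ∑ k ∈ Finset.Icc 2 n, X k ω := by
    intro n ω; rw [hSdef]; simp [Finset.sum_apply]
  have hSmem : ∀ n, MemLp (S n) 2 μ := fun n =>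
    memLp_finset_sum' _ fun k hk => (hstats k (Finset.mem_Icc.mp hk).1).1
  have hSE : ∀ n, μ[S n] = θ * (harmonic (n - 1) : ℝ) := by
    intro n
    have h1 : μ[S n] = ∑ k ∈ Finset.Icc 2 n, ∫ ω, X k ω ∂μ := by
      rw [hSdef]
      rw [show (∫ ω, (∑ k ∈ Finset.Icc 2 n, X k) ω ∂μ)
          = ∫ ω, ∑ k ∈ Finset.Icc 2 n, X k ω ∂μ from by simp [Finset.sum_apply]]
      exact integral_finset_sum _ fun k hk =>
        ((hstats k (Finset.mem_Icc.mp hk).1).1).integrable one_le_two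
    rw [h1, ← harmonic_sum_eq n, Finset.mul_sum]
    exact Finset.sum_congr rfl fun k hk => (hstats k (Finset.mem_Icc.mp hk).1).2.1
  have hSvar : ∀ n, variance (S n) μ ≤ (θ + 2 * θ ^ 2) * (harmonic (n - 1) : ℝ) := by
    intro n
    have hpair : Set.Pairwise ↑(Finset.Icc 2 n) fun i j => IndepFun (X i) (X j) μ := by
      intro i hi j hj hij
      simp only [Finset.coe_Icc, Set.mem_Icc] at hi hj
      have hne : (⟨i, hi.1⟩ : {k : ℕ // 2 ≤ k}) ≠ ⟨j, hj.1⟩ := by simpa using hij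
      exact (hindep.indepFun hne).comp measurable_from_nat measurable_from_nat
    rw [hSdef, IndepFun.variance_sum (fun k hk => (hstats k (Finset.mem_Icc.mp hk).1).1) hpair]
    calc ∑ k ∈ Finset.Icc 2 n, variance (X k) μ
        ≤ ∑ k ∈ Finset.Icc 2 n, (θ + 2 * θ ^ 2) * (1 / ((k : ℝ) - 1)) :=
          Finset.sum_le_sum fun k hk => (hstats k (Finset.mem_Icc.mp hk).1).2.2
      _ = (θ + 2 * θ ^ 2) * (harmonic (n - 1) : ℝ) := by
          rw [← Finset.mul_sum, harmonic_sum_eq]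
  -- Borel-Cantelli along the subsequence
  have hBC : ∀ j : ℕ, ∀ᵐ ω ∂μ, ∀ᶠ m : ℕ in atTop,
      |S (2 ^ (m ^ 2)) ω - μ[S (2 ^ (m ^ 2))]|
        < (1 / ((j : ℝ) + 1)) * Real.log ((2 ^ (m ^ 2) : ℕ) : ℝ) := by
    intro j
    set ε := 1 / ((j : ℝ) + 1) with hεdef
    have hε0 : 0 < ε := by positivity
    set L := Real.log 2 with hLdef
    have hL0 : 0 < L := Real.log_pos one_lt_two
    have hL1 : L ≤ 1 := by
      have := Real.log_le_sub_one_of_pos (show (0:ℝ) < 2 by norm_num)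
      linarith
    set C := 2 * (θ + 2 * θ ^ 2) / (ε ^ 2 * L ^ 2) with hCdef
    have hC0 : 0 ≤ C := by positivity
    set A : ℕ → Set Ω := fun m =>
      {ω | ε * Real.log ((2 ^ (m ^ 2) : ℕ) : ℝ) ≤ |S (2 ^ (m ^ 2)) ω - μ[S (2 ^ (m ^ 2))]|}
      with hAdef
    have hlogpow : ∀ m : ℕ, Real.log ((2 ^ (m ^ 2) : ℕ) : ℝ) = (m : ℝ) ^ 2 * L := by
      intro m
      rw [show ((2 ^ (m ^ 2) : ℕ) : ℝ) = (2 : ℝ) ^ (m ^ 2) by push_cast; ring, Real.log_pow]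
      push_cast; ring
    have hmeasA : ∀ m, 1 ≤ m → μ (A m) ≤ ENNReal.ofReal (C / (m : ℝ) ^ 2) := by
      intro m hm
      have hm1 : (1 : ℝ) ≤ (m : ℝ) := by exact_mod_cast hm
      have hmsq : (0 : ℝ) < (m : ℝ) ^ 2 := by nlinarith
      have hc0 : 0 < ε * ((m : ℝ) ^ 2 * L) := by positivity
      have hcheb := meas_ge_le_variance_div_sq (μ := μ) (hSmem (2 ^ (m ^ 2))) hc0
      have hAset : A m = {ω | ε * ((m : ℝ) ^ 2 * L)
          ≤ |S (2 ^ (m ^ 2)) ω - μ[S (2 ^ (m ^ 2))]|} := by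
        rw [hAdef]; simp only [hlogpow]
      rw [hAset]
      refine le_trans hcheb (ENNReal.ofReal_le_ofReal ?_)
      have h2N : 2 ≤ 2 ^ (m ^ 2) := by
        have : 2 ^ 1 ≤ 2 ^ (m ^ 2) := Nat.pow_le_pow_right (by norm_num) (by nlinarith)
        simpa using this
      have hharm : (harmonic (2 ^ (m ^ 2) - 1) : ℝ) ≤ 1 + (m : ℝ) ^ 2 * L := by
        have := harmonic_log_ub h2N
        rwa [hlogpow m] at this
      have hvar : variance (S (2 ^ (m ^ 2))) μ ≤ (θ + 2 * θ ^ 2) * (2 * (m : ℝ) ^ 2) := by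
        refine (hSvar (2 ^ (m ^ 2))).trans ?_
        have h1 : (harmonic (2 ^ (m ^ 2) - 1) : ℝ) ≤ 2 * (m : ℝ) ^ 2 := by nlinarith
        nlinarith
      have hvar0 : (0:ℝ) ≤ (θ + 2 * θ ^ 2) * (2 * (m : ℝ) ^ 2) := by positivity
      calc variance (S (2 ^ (m ^ 2))) μ / (ε * ((m : ℝ) ^ 2 * L)) ^ 2
          ≤ (θ + 2 * θ ^ 2) * (2 * (m : ℝ) ^ 2) / (ε * ((m : ℝ) ^ 2 * L)) ^ 2 := by
            exact (div_le_div_iff_of_pos_right (by positivity)).mpr hvar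
        _ = C / (m : ℝ) ^ 2 := by
            rw [hCdef]
            field_simp
    have hsum : (∑' m, μ (A m)) ≠ ⊤ := by
      have hle : ∀ m, μ (A m) ≤ ENNReal.ofReal (C / (m : ℝ) ^ 2)
          + (if m = 0 then 1 else 0) := by
        intro m
        rcases Nat.eq_zero_or_pos m with h0 | h1
        · subst h0
          simp only [if_pos rfl]
          calc μ (A 0) ≤ 1 := prob_le_one
          _ ≤ _ := le_add_self
        · refine le_trans (hmeasA m h1) ?_
          simp [h1.ne']
      refine ne_top_of_le_ne_top ?_ (ENNReal.tsum_le_tsum hle)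
      rw [ENNReal.tsum_add]
      have h1 : (∑' m : ℕ, (if m = 0 then (1 : ℝ≥0∞) else 0)) = 1 := tsum_ite_eq 0 1
      have h2 : (∑' m : ℕ, ENNReal.ofReal (C / (m : ℝ) ^ 2)) ≠ ⊤ := by
        have hsummable : Summable fun m : ℕ => C / (m : ℝ) ^ 2 := by
          have hbase : Summable fun m : ℕ => 1 / (m : ℝ) ^ 2 := by
            simpa using Real.summable_one_div_nat_pow.mpr one_lt_two
          have := hbase.mul_left C
          simpa [div_eq_mul_inv] using this
        rw [← ENNReal.ofReal_tsum_of_nonneg (fun m => by positivity) hsummable]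
        exact ENNReal.ofReal_ne_top
      rw [h1]
      exact ENNReal.add_ne_top.mpr ⟨h2, ENNReal.one_ne_top⟩
    filter_upwards [MeasureTheory.ae_eventually_notMem hsum] with ω hω
    filter_upwards [hω] with m hm
    have : ¬ (ε * Real.log ((2 ^ (m ^ 2) : ℕ) : ℝ)
        ≤ |S (2 ^ (m ^ 2)) ω - μ[S (2 ^ (m ^ 2))]|) := hm
    rw [not_le] at this
    simpa [hεdef] using this
  have hall : ∀ᵐ ω ∂μ, ∀ j : ℕ, ∀ᶠ m : ℕ in atTop,
      |S (2 ^ (m ^ 2)) ω - μ[S (2 ^ (m ^ 2))]|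
        < (1 / ((j : ℝ) + 1)) * Real.log ((2 ^ (m ^ 2) : ℕ) : ℝ) := ae_all_iff.mpr hBC
  filter_upwards [hall] with ω hω
  have hT0 : ∀ n, 0 ≤ S n ω := by
    intro n
    rw [hSapp]
    exact Finset.sum_nonneg fun k _ => by simp [hXdef]
  have hmono : Monotone fun n => S n ω := by
    intro a b hab
    show S a ω ≤ S b ω
    rw [hSapp, hSapp]
    exact Finset.sum_le_sum_of_subset_of_nonneg (Finset.Icc_subset_Icc_right hab)
      fun k _ _ => by simp [hXdef]
  have hH : ∀ j : ℕ, ∀ᶠ m : ℕ in atTop,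
      |S (2 ^ (m ^ 2)) ω - θ * (harmonic (2 ^ (m ^ 2) - 1) : ℝ)|
        < (1 / ((j : ℝ) + 1)) * Real.log ((2 ^ (m ^ 2) : ℕ) : ℝ) := by
    intro j
    filter_upwards [hω j] with m hm
    rwa [hSE] at hm
  have hfinal := deterministic_slln θ hθ (fun n => S n ω) hT0 hmono hH
  refine hfinal.congr fun n => ?_
  show S n ω / Real.log n = _
  rw [hSapp]
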